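/- Let M3^b be the five-element bounded lattice whose middle elements form a three-element antichain, and let F be the free bounded lattice of denumerable rank for the variety V = V(M3^b). Then M3^b admits no homomorphism of bounded lattices into F. -/

import Mathlib

/-- A bundled bounded lattice. -/
structure BLat where
  carrier : Type
  [lat : Lattice carrier]
  [bdd : BoundedOrder carrier]

attribute [instance] BLat.lat BLat.bdd

/-- Direct product of a family of bounded lattices. -/
def BLat.pi {I : Type} (A : I → BLat) : BLat := ⟨∀ i, (A i).carrier⟩

/-- A class of bounded lattices is a variety if it is closed under homomorphic images,
subalgebras (injective bounded lattice homomorphisms) and direct products. -/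
def IsBLatVariety (V : Set BLat) : Prop :=
  (∀ A ∈ V, ∀ B : BLat, ∀ f : BoundedLatticeHom A.carrier B.carrier,
      Function.Surjective f → B ∈ V) ∧
  (∀ A : BLat, ∀ B ∈ V, ∀ f : BoundedLatticeHom A.carrier B.carrier,
      Function.Injective f → A ∈ V) ∧
  (∀ (I : Type) (A : I → BLat), (∀ i, A i ∈ V) → BLat.pi A ∈ V)

/-! The five-element lattice `M3` (diamond): bottom `o`, top `i`, and a three-element
antichain `a`, `b`, `c` in the middle. -/

inductive M3T | o | a | b | c | i
deriving DecidableEq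

instance : Fintype M3T :=
  ⟨⟨{M3T.o, M3T.a, M3T.b, M3T.c, M3T.i}, by decide⟩, fun x => by cases x <;> decide⟩

namespace M3T

def leB : M3T → M3T → Bool
  | .o, _ => true
  | _, .i => true
  | .a, .a => true
  | .b, .b => true
  | .c, .c => true
  | _, _ => false

def supF : M3T → M3T → M3T
  | .o, x => x
  | x, .o => x
  | .a, .a => .a
  | .b, .b => .b
  | .c, .c => .c
  | _, _ => .i

def infF : M3T → M3T → M3T
  | .i, x => x
  | x, .i => x
  | .a, .a => .a
  | .b, .b => .b
  | .c, .c => .c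
  | _, _ => .o

instance : PartialOrder M3T where
  le x y := leB x y = true
  le_refl := (by decide : ∀ a : M3T, leB a a = true)
  le_trans := (by decide : ∀ a b c : M3T, leB a b = true → leB b c = true → leB a c = true)
  le_antisymm := (by decide : ∀ a b : M3T, leB a b = true → leB b a = true → a = b)

instance : Lattice M3T where
  sup := supF
  le_sup_left := (by decide : ∀ a b : M3T, leB a (supF a b) = true)
  le_sup_right := (by decide : ∀ a b : M3T, leB b (supF a b) = true)
  sup_le := (by decide : ∀ a b c : M3T, leB a c = true → leB b c = true → leB (supF a b) c = true)
  inf := infF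
  inf_le_left := (by decide : ∀ a b : M3T, leB (infF a b) a = true)
  inf_le_right := (by decide : ∀ a b : M3T, leB (infF a b) b = true)
  le_inf := (by decide : ∀ a b c : M3T, leB a b = true → leB a c = true → leB a (infF b c) = true)

instance : BoundedOrder M3T where
  top := .i
  le_top := (by decide : ∀ a : M3T, leB a .i = true)
  bot := .o
  bot_le := (by decide : ∀ a : M3T, leB .o a = true)

end M3T

/-- The bounded lattice `M3ᵇ`. -/
def M3b : BLat := ⟨M3T⟩

/-- `F` is free for `V` over the countably infinite set of generators `x 0, x 1, …`. -/
def IsFreeOverNat (V : Set BLat) (F : BLat) (x : ℕ → F.carrier) : Prop :=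
  F ∈ V ∧ ∀ A ∈ V, ∀ g : ℕ → A.carrier,
    ∃! h : BoundedLatticeHom F.carrier A.carrier, ∀ n, h (x n) = g n

section Aux

variable {α : Type} [Lattice α] [BoundedOrder α]

/-- Elements generated by a family `x` together with `⊥`, `⊤` under `⊔`, `⊓`. -/
inductive Gen (x : ℕ → α) : α → Prop
  | var (n : ℕ) : Gen x (x n)
  | bot : Gen x ⊥
  | top : Gen x ⊤
  | sup {a b : α} : Gen x a → Gen x b → Gen x (a ⊔ b)
  | inf {a b : α} : Gen x a → Gen x b → Gen x (a ⊓ b)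

def GenSub (x : ℕ → α) : Type := {y : α // Gen x y}

instance (x : ℕ → α) : Lattice (GenSub x) where
  sup a b := ⟨a.1 ⊔ b.1, a.2.sup b.2⟩
  inf a b := ⟨a.1 ⊓ b.1, a.2.inf b.2⟩
  le a b := a.1 ≤ b.1
  le_refl a := le_refl a.1
  le_trans a b c hab hbc := le_trans (α := α) hab hbc
  le_antisymm a b hab hba := Subtype.ext (le_antisymm hab hba)
  le_sup_left a b := le_sup_left (α := α)
  le_sup_right a b := le_sup_right (α := α)
  sup_le a b c h1 h2 := sup_le (α := α) h1 h2
  inf_le_left a b := inf_le_left (α := α)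
  inf_le_right a b := inf_le_right (α := α)
  le_inf a b c h1 h2 := le_inf (α := α) h1 h2

instance (x : ℕ → α) : BoundedOrder (GenSub x) where
  top := ⟨⊤, Gen.top⟩
  le_top a := le_top (α := α)
  bot := ⟨⊥, Gen.bot⟩
  bot_le a := bot_le (α := α)

def genIncl (x : ℕ → α) : BoundedLatticeHom (GenSub x) α where
  toFun := Subtype.val
  map_sup' _ _ := rfl
  map_inf' _ _ := rfl
  map_top' := rfl
  map_bot' := rfl

lemma m3_final : ∀ u v w : M3T, (u = ⊥ ∨ u = ⊤) → (v = ⊥ ∨ v = ⊤) → (w = ⊥ ∨ w = ⊤) →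
    u ⊔ v = ⊤ → u ⊓ v = ⊥ → u ⊔ w = ⊤ → u ⊓ w = ⊥ → v ⊔ w = ⊤ → v ⊓ w = ⊥ → False := by
  decide

end Aux

/-- let `V = V(M3ᵇ)` be the variety generated by the bounded lattice
`M3ᵇ` (the least variety containing it), and let `F` be the free bounded lattice of
denumerable rank for `V`.  Then there is no bounded lattice homomorphism from `M3ᵇ`
into `F`. -/
theorem stmt19 (V : Set BLat) (hV : IsBLatVariety V) (hM3 : M3b ∈ V)
    (hmin : ∀ W : Set BLat, IsBLatVariety W → M3b ∈ W → V ⊆ W)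
    (F : BLat) (x : ℕ → F.carrier) (hF : IsFreeOverNat V F x) :
    ¬ Nonempty (BoundedLatticeHom M3b.carrier F.carrier) := by
  rintro ⟨f⟩
  obtain ⟨hFV, hfree⟩ := hF
  -- the subalgebra generated by the generators
  set S : BLat := ⟨GenSub x⟩ with hS
  have hSV : S ∈ V :=
    hV.2.1 S F hFV (genIncl x) Subtype.val_injective
  obtain ⟨h, hh, -⟩ := hfree S hSV (fun n => ⟨x n, Gen.var n⟩)
  obtain ⟨k, -, kuniq⟩ := hfree F hFV x
  have h1 : (genIncl x).comp h = BoundedLatticeHom.id F.carrier := by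
    have e1 := kuniq ((genIncl x).comp h) (fun n => by
      simp only [BoundedLatticeHom.comp_apply, hh n]; rfl)
    have e2 := kuniq (BoundedLatticeHom.id F.carrier) (fun n => rfl)
    rw [e1, e2]
  have gen : ∀ y : F.carrier, Gen x y := by
    intro y
    have := DFunLike.congr_fun h1 y
    simp only [BoundedLatticeHom.comp_apply, BoundedLatticeHom.id_apply] at this
    exact this ▸ (h y).2
  -- evaluation sending all generators to ⊥
  obtain ⟨e, he, -⟩ := hfree M3b hM3 (fun _ => (⊥ : M3T))
  have range : ∀ y : F.carrier, Gen x y → e y = ⊥ ∨ e y = ⊤ := by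
    intro y hy
    induction hy with
    | var n => left; exact he n
    | bot => left; exact map_bot e
    | top => right; exact map_top e
    | sup ha hb iha ihb =>
        rw [map_sup]
        rcases iha with h | h <;> rcases ihb with h' | h' <;> rw [h, h'] <;> simp
    | inf ha hb iha ihb =>
        rw [map_inf]
        rcases iha with h | h <;> rcases ihb with h' | h' <;> rw [h, h'] <;> simp
  have hab : (M3T.a : M3T) ⊔ M3T.b = ⊤ := rfl
  have hab' : (M3T.a : M3T) ⊓ M3T.b = ⊥ := rfl
  have hac : (M3T.a : M3T) ⊔ M3T.c = ⊤ := rfl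
  have hac' : (M3T.a : M3T) ⊓ M3T.c = ⊥ := rfl
  have hbc : (M3T.b : M3T) ⊔ M3T.c = ⊤ := rfl
  have hbc' : (M3T.b : M3T) ⊓ M3T.c = ⊥ := rfl
  have key : ∀ u v : M3T, u ⊔ v = ⊤ → u ⊓ v = ⊥ →
      e (f u) ⊔ e (f v) = ⊤ ∧ e (f u) ⊓ e (f v) = ⊥ := by
    intro u v h1 h2
    constructor
    · exact ((map_sup e (f u) (f v)).symm.trans (congrArg e (map_sup (α := M3b.carrier) f u v).symm)).trans
        ((congrArg (fun t : M3b.carrier => e (f t)) h1).trans ((congrArg e (map_top f)).trans (map_top e)))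
    · exact ((map_inf e (f u) (f v)).symm.trans (congrArg e (map_inf (α := M3b.carrier) f u v).symm)).trans
        ((congrArg (fun t : M3b.carrier => e (f t)) h2).trans ((congrArg e (map_bot f)).trans (map_bot e)))
  exact m3_final (e (f M3T.a)) (e (f M3T.b)) (e (f M3T.c))
    (range _ (gen _)) (range _ (gen _)) (range _ (gen _))
    (key _ _ hab hab').1 (key _ _ hab hab').2
    (key _ _ hac hac').1 (key _ _ hac hac').2
    (key _ _ hbc hbc').1 (key _ _ hbc hbc').2
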